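/- Let l₁, l₂ be nonnegative integers with L := l₁ + l₂ > 2. Then there exists a polynomial P in two variables Y₁, Y₂ with real coefficients, homogeneous of degree L − 2, such that Φ₂(0, l₁, l₂; y₁, y₂) = P(y₁, y₂) for every admissible pair (y₁, y₂), and the coefficient of the monomial Y₁^{L−2} in P equals 1. -/

import Mathlib

/-- `S y a b = y_a + y_{a+1} + ⋯ + y_b`. -/
noncomputable def S (y : ℕ → ℝ) (a b : ℕ) : ℝ := ∑ t ∈ Finset.Icc a b, y t

/-- `(y₁, …, yₙ)` is admissible if `S(a,b) ≠ 0` for all `1 ≤ a ≤ b ≤ n`. -/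
def Admissible (n : ℕ) (y : ℕ → ℝ) : Prop :=
  ∀ a b : ℕ, 1 ≤ a → a ≤ b → b ≤ n → S y a b ≠ 0

/-- `Φₙ(l₀,…,lₙ; y₁,…,yₙ)`, the pointwise ε→0 value of the distributional sum of
Lemma 1 of the paper. -/
noncomputable def Phi (n : ℕ) (l : ℕ → ℕ) (y : ℕ → ℝ) : ℝ :=
  ∑ m ∈ Finset.range (n + 1),
    (-1 : ℝ) ^ m *
      (∏ r ∈ Finset.range m, (-S y (r + 1) m) ^ l r / S y (r + 1) m) *
      (if l m = 0 then 1 else 0) *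
      (∏ r ∈ Finset.Icc (m + 1) n, (S y (m + 1) r) ^ l r / S y (m + 1) r)

/-- for `l₀ = 0` and `L = l₁ + l₂ > 2`, `Φ₂(0,l₁,l₂; y₁,y₂)` is
given on admissible pairs by a homogeneous polynomial `P` of degree `L − 2` in
two variables `Y₁, Y₂` (variable `0` evaluated at `y₁`, variable `1` at `y₂`),
and the coefficient of `Y₁^{L−2}` in `P` equals `1`. -/
lemma coeff_single_eq_eval {d : ℕ} {P : MvPolynomial (Fin 2) ℝ} (h : P.IsHomogeneous d) :
    MvPolynomial.coeff (Finsupp.single (0 : Fin 2) d) P =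
      MvPolynomial.eval (fun i : Fin 2 => if i = 0 then 1 else 0) P := by
  rw [MvPolynomial.eval_eq]
  rw [Finset.sum_eq_single (Finsupp.single (0 : Fin 2) d)]
  · rw [Finset.prod_eq_one, mul_one]
    intro i hi
    have h0 := Finsupp.support_single_subset hi
    have hi0 : i = 0 := by simpa using h0
    simp [hi0]
  · intro b hb hne
    by_cases hb1 : b 1 = 0
    · exfalso
      apply hne
      have hd : b.degree = d := by
        have := h (MvPolynomial.mem_support_iff.mp hb)
        rwa [show (1 : Fin 2 → ℕ) = fun _ => 1 from rfl, ← Finsupp.degree_eq_weight_one] at this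
      have hdeg : b 0 + b 1 = d := by
        rw [← hd, Finsupp.degree_apply]
        rw [Finset.sum_subset (Finset.subset_univ b.support)]
        · simp [Fin.sum_univ_two]
        · intro x _ hx; exact Finsupp.notMem_support_iff.mp hx
      ext i
      fin_cases i <;> simp [hb1] <;> omega
    · have h1 : (1 : Fin 2) ∈ b.support := Finsupp.mem_support_iff.mpr hb1
      rw [Finset.prod_eq_zero h1, mul_zero]
      simp [zero_pow hb1]
  · intro h'
    rw [MvPolynomial.notMem_support_iff.mp h', zero_mul]

lemma phi_expand (l₁ l₂ : ℕ) (y : ℕ → ℝ) :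
    Phi 2 (fun r => if r = 1 then l₁ else if r = 2 then l₂ else 0) y =
      (y 1 ^ l₁ / y 1 * ((y 1 + y 2) ^ l₂ / (y 1 + y 2)) +
        if l₁ = 0 then -((y 1)⁻¹ * (y 2 ^ l₂ / y 2)) else 0) +
        if l₂ = 0 then (y 1 + y 2)⁻¹ * ((-y 2) ^ l₁ / y 2) else 0 := by
  have hS11 : S y 1 1 = y 1 := by simp [S]
  have hS22 : S y 2 2 = y 2 := by simp [S]
  have hS12 : S y 1 2 = y 1 + y 2 := by
    rw [S, show Finset.Icc 1 2 = {1, 2} from rfl]; simp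
  rw [Phi]
  rw [Finset.sum_range_succ, Finset.sum_range_succ, Finset.sum_range_one]
  rw [show Finset.Icc 1 2 = {1, 2} from rfl, show Finset.Icc 2 2 = {2} from rfl,
    show Finset.Icc 3 2 = (∅ : Finset ℕ) from rfl]
  simp only [Finset.prod_insert (by decide : (1:ℕ) ∉ ({2}:Finset ℕ)), Finset.prod_singleton,
    Finset.prod_empty, Finset.range_one, Finset.prod_range_succ, Finset.prod_range_zero]
  norm_num [hS11, hS22, hS12]

theorem Phi_two_poly_coeff_first (l₁ l₂ : ℕ) (hL : 2 < l₁ + l₂) :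
    ∃ P : MvPolynomial (Fin 2) ℝ,
      P.IsHomogeneous (l₁ + l₂ - 2) ∧
      (∀ y : ℕ → ℝ, Admissible 2 y →
        Phi 2 (fun r => if r = 1 then l₁ else if r = 2 then l₂ else 0) y =
          MvPolynomial.eval (fun i : Fin 2 => y (i.val + 1)) P) ∧
      MvPolynomial.coeff (Finsupp.single (0 : Fin 2) (l₁ + l₂ - 2)) P = 1 := by
  rcases Nat.eq_zero_or_pos l₁ with h10 | h1pos
  · -- case l₁ = 0, l₂ ≥ 3
    subst h10
    obtain ⟨c, rfl⟩ : ∃ c, l₂ = c + 2 := ⟨l₂ - 2, by omega⟩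
    have hhom : (∑ j ∈ Finset.range (c + 1),
        (MvPolynomial.X 0 + MvPolynomial.X 1) ^ j * MvPolynomial.X 1 ^ (c - j) :
        MvPolynomial (Fin 2) ℝ).IsHomogeneous (0 + (c + 2) - 2) := by
      have hdeg : 0 + (c + 2) - 2 = c := by omega
      rw [hdeg]
      apply MvPolynomial.IsHomogeneous.sum
      intro j hj
      have h := (((MvPolynomial.isHomogeneous_X ℝ (0 : Fin 2)).add (MvPolynomial.isHomogeneous_X ℝ (1 : Fin 2))).pow j).mul
        ((MvPolynomial.isHomogeneous_X ℝ (1 : Fin 2)).pow (c - j))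
      have hc : 1 * j + 1 * (c - j) = c := by
        have := Finset.mem_range.mp hj; omega
      rwa [hc] at h
    refine ⟨_, hhom, ?_, ?_⟩
    · intro y hy
      have h1 : y 1 ≠ 0 := by have := hy 1 1 le_rfl le_rfl (by norm_num); simpa [S] using this
      have h2 : y 2 ≠ 0 := by have := hy 2 2 (by norm_num) le_rfl le_rfl; simpa [S] using this
      have h12 : y 1 + y 2 ≠ 0 := by
        have := hy 1 2 le_rfl (by norm_num) le_rfl
        rwa [S, show Finset.Icc 1 2 = {1, 2} from rfl, Finset.sum_insert (by decide),
          Finset.sum_singleton] at this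
      rw [phi_expand]
      simp only [if_pos rfl, if_neg (by omega : ¬ c + 2 = 0), add_zero, pow_zero, ↓reduceIte]
      rw [show ((MvPolynomial.eval fun i : Fin 2 => y (i.val + 1)) _ ) =
        ∑ j ∈ Finset.range (c + 1), (y 1 + y 2) ^ j * y 2 ^ (c - j) by simp]
      set s : ℝ := ∑ j ∈ Finset.range (c + 1), (y 1 + y 2) ^ j * y 2 ^ (c - j) with hs_def
      have key : s * (y 1) = (y 1 + y 2) ^ (c + 1) - y 2 ^ (c + 1) := by
        have := geom_sum₂_mul (y 1 + y 2) (y 2) (c + 1)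
        simpa [hs_def] using this
      rw [pow_succ (y 1 + y 2) (c + 1), mul_div_assoc, div_self h12, mul_one,
        pow_succ (y 2) (c + 1), mul_div_assoc, div_self h2, mul_one]
      field_simp
      linear_combination (-1:ℝ) * key
    · rw [coeff_single_eq_eval]
      · rw [map_sum]
        rw [Finset.sum_eq_single c]
        · simp
        · intro j hj hne
          have : c - j ≠ 0 := by have := Finset.mem_range.mp hj; omega
          simp [zero_pow this]
        · intro h; exact absurd (Finset.self_mem_range_succ c) h
      · exact hhom
  · rcases Nat.eq_zero_or_pos l₂ with h20 | h2pos
    · -- case l₂ = 0, l₁ ≥ 3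
      subst h20
      obtain ⟨c, rfl⟩ : ∃ c, l₁ = c + 2 := ⟨l₁ - 2, by omega⟩
      have hhom : (∑ j ∈ Finset.range (c + 1),
          MvPolynomial.X 0 ^ j * (-MvPolynomial.X 1) ^ (c - j) :
          MvPolynomial (Fin 2) ℝ).IsHomogeneous (c + 2 + 0 - 2) := by
        have hdeg : c + 2 + 0 - 2 = c := by omega
        rw [hdeg]
        apply MvPolynomial.IsHomogeneous.sum
        intro j hj
        have h := ((MvPolynomial.isHomogeneous_X ℝ (0 : Fin 2)).pow j).mul
          (((MvPolynomial.isHomogeneous_X ℝ (1 : Fin 2)).neg).pow (c - j))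
        have hc : 1 * j + 1 * (c - j) = c := by
          have := Finset.mem_range.mp hj; omega
        rwa [hc] at h
      refine ⟨_, hhom, ?_, ?_⟩
      · intro y hy
        have h1 : y 1 ≠ 0 := by have := hy 1 1 le_rfl le_rfl (by norm_num); simpa [S] using this
        have h2 : y 2 ≠ 0 := by have := hy 2 2 (by norm_num) le_rfl le_rfl; simpa [S] using this
        have h12 : y 1 + y 2 ≠ 0 := by
          have := hy 1 2 le_rfl (by norm_num) le_rfl
          rwa [S, show Finset.Icc 1 2 = {1, 2} from rfl, Finset.sum_insert (by decide),
            Finset.sum_singleton] at this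
        rw [phi_expand]
        simp only [if_pos rfl, if_neg (by omega : ¬ c + 2 = 0), add_zero, pow_zero, ↓reduceIte]
        rw [show ((MvPolynomial.eval fun i : Fin 2 => y (i.val + 1)) _ ) =
          ∑ j ∈ Finset.range (c + 1), y 1 ^ j * (-y 2) ^ (c - j) by simp]
        set s : ℝ := ∑ j ∈ Finset.range (c + 1), y 1 ^ j * (-y 2) ^ (c - j) with hs_def
        have key : s * (y 1 + y 2) = y 1 ^ (c + 1) - (-y 2) ^ (c + 1) := by
          have := geom_sum₂_mul (y 1) (-y 2) (c + 1)
          rw [sub_neg_eq_add] at this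
          simpa [hs_def] using this
        rw [pow_succ (y 1) (c + 1), mul_div_assoc, div_self h1, mul_one,
          pow_succ (-y 2) (c + 1)]
        have hrw : (-y 2) ^ (c + 1) * (-y 2) / y 2 = -((-y 2) ^ (c + 1)) := by
          field_simp
        rw [hrw]
        field_simp
        linear_combination (-1:ℝ) * key
      · rw [coeff_single_eq_eval]
        · rw [map_sum]
          rw [Finset.sum_eq_single c]
          · simp
          · intro j hj hne
            have : c - j ≠ 0 := by have := Finset.mem_range.mp hj; omega
            simp [zero_pow this]
          · intro h; exact absurd (Finset.self_mem_range_succ c) h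
        · exact hhom
    · -- case l₁ ≥ 1, l₂ ≥ 1
      obtain ⟨a, rfl⟩ : ∃ a, l₁ = a + 1 := ⟨l₁ - 1, by omega⟩
      obtain ⟨b, rfl⟩ : ∃ b, l₂ = b + 1 := ⟨l₂ - 1, by omega⟩
      have hhom : (MvPolynomial.X 0 ^ a * (MvPolynomial.X 0 + MvPolynomial.X 1) ^ b :
          MvPolynomial (Fin 2) ℝ).IsHomogeneous (a + 1 + (b + 1) - 2) := by
        have hdeg : a + 1 + (b + 1) - 2 = 1 * a + 1 * b := by omega
        rw [hdeg]
        exact ((MvPolynomial.isHomogeneous_X ℝ (0 : Fin 2)).pow a).mul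
          (((MvPolynomial.isHomogeneous_X ℝ (0 : Fin 2)).add (MvPolynomial.isHomogeneous_X ℝ (1 : Fin 2))).pow b)
      refine ⟨_, hhom, ?_, ?_⟩
      · intro y hy
        have h1 : y 1 ≠ 0 := by have := hy 1 1 le_rfl le_rfl (by norm_num); simpa [S] using this
        have h12 : y 1 + y 2 ≠ 0 := by
          have := hy 1 2 le_rfl (by norm_num) le_rfl
          rwa [S, show Finset.Icc 1 2 = {1, 2} from rfl, Finset.sum_insert (by decide),
            Finset.sum_singleton] at this
        rw [phi_expand]
        simp only [if_neg (by omega : ¬ a + 1 = 0), if_neg (by omega : ¬ b + 1 = 0), add_zero]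
        rw [pow_succ (y 1) a, mul_div_assoc, div_self h1, mul_one,
          pow_succ (y 1 + y 2) b, mul_div_assoc, div_self h12, mul_one]
        simp
      · rw [coeff_single_eq_eval hhom]
        simp
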